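/- For every u = (u_1, ..., u_n) ∈ (ℝ^d)^n, every integer k with 1 ≤ k ≤ n, and every symmetric matrix α ∈ ℕ^{k×k}, the full contraction of moment tensors satisfies ⊗_α (M_{α_{11},α'_1}(u), ..., M_{α_{kk},α'_k}(u)) = Σ_{γ ∈ {1,...,n}^k} ∏_{1 ≤ i ≤ j ≤ k} (u_{γ_i} · u_{γ_j})^{α_{ij}}, where the factor for i = j is |u_{γ_i}|^{2 α_{ii}}. -/
import Mathlib


/-- Euclidean inner product on `ℝ^d`. -/
def dotR {d : ℕ} (v w : Fin d → ℝ) : ℝ := ∑ a, v a * w a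

/-- `|v|² = v · v`. -/
def normSqR {d : ℕ} (v : Fin d → ℝ) : ℝ := ∑ a, v a * v a

/-- The moment tensor `M_{μ,ν}(u)`: its `(j_1, …, j_ν)`-component is
`Σ_{i=1}^n |u_i|^{2μ} u_{i,j_1} ⋯ u_{i,j_ν}`. -/
def Mten {d n : ℕ} (u : Fin n → Fin d → ℝ) (μ ν : ℕ) (J : Fin ν → Fin d) : ℝ :=
  ∑ i : Fin n, (normSqR (u i)) ^ μ * ∏ l : Fin ν, u i (J l)

/-- Off-diagonal part of `α`: `α''_{ij} = α_{ij}` for `i ≠ j` and `0` on the diagonal,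
so that `α'_i = Σ_{j ≠ i} α_{ij} = Σ_j α''_{ij}`. -/
def offdiag {k : ℕ} (α : Fin k → Fin k → ℕ) (i j : Fin k) : ℕ := if i = j then 0 else α i j

/-- The type of collections `β = (β^{(i,j)})_{1 ≤ i < j ≤ k}` with
`β^{(i,j)} ∈ {1,…,d}^{α_{ij}}`. -/
abbrev BetaType (d k : ℕ) (α : Fin k → Fin k → ℕ) : Type :=
  ∀ p : {p : Fin k × Fin k // p.1 < p.2}, Fin (α p.val.1 p.val.2) → Fin d

/-- Look up the entry of the collection `β` associated to the (unordered) pair `{i,j}`,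
`i ≠ j`, using the convention `β^{(j,i)} := β^{(i,j)}` for `i < j` (this uses the symmetry
of `α`). -/
def lookup {d k : ℕ} (α : Fin k → Fin k → ℕ) (hsym : ∀ i j, α i j = α j i)
    (β : BetaType d k α) (i j : Fin k) (l : Fin (offdiag α i j)) : Fin d :=
  if h : i < j then
    β ⟨(i, j), h⟩ (Fin.cast (by simp [offdiag, h.ne]) l)
  else if h' : j < i then
    β ⟨(j, i), h'⟩ (Fin.cast (by simp only [offdiag, if_neg h'.ne']; exact hsym i j) l)
  else
    Fin.elim0 (Fin.cast
      (show offdiag α i j = 0 by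
        simp [offdiag, le_antisymm (not_lt.mp h') (not_lt.mp h)]) l)

/-- A bijection realizing the index set of the `i`-th tensor `T^{(i)}`, of order
`α'_i = Σ_j α''_{ij}`, as the "concatenation" of the blocks `{1,…,α''_{ij}}`, `j = 1,…,k`. -/
noncomputable def concatIdx {k : ℕ} (α : Fin k → Fin k → ℕ) (i : Fin k) :
    Fin (∑ j, offdiag α i j) ≃ (Σ j : Fin k, Fin (offdiag α i j)) :=
  (Fintype.equivFinOfCardEq (by simp)).symm

/-- The full contraction `⊗_α (M_{α_{11},α'_1}(u), …, M_{α_{kk},α'_k}(u))`: the sum over all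
collections `β` of the products over `i` of the components of `T^{(i)} = M_{α_{ii},α'_i}(u)`
whose multiindex is the concatenation of the `β^{(j,i)}`, `j < i`, and `β^{(i,j)}`, `j > i`. -/
noncomputable def contraction {d n : ℕ} (u : Fin n → Fin d → ℝ) (k : ℕ)
    (α : Fin k → Fin k → ℕ) (hsym : ∀ i j, α i j = α j i) : ℝ :=
  ∑ β : BetaType d k α, ∏ i : Fin k,
    Mten u (α i i) (∑ j, offdiag α i j)
      (fun z => lookup α hsym β i (concatIdx α i z).1 (concatIdx α i z).2)

-- AUX
lemma pair_prod {k : ℕ} (f : Fin k × Fin k → ℝ) :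
    ∏ p : {p : Fin k × Fin k // p.1 < p.2}, f p.val
      = ∏ i : Fin k, ∏ j ∈ Finset.univ.filter (fun j => i < j), f (i, j) := by
  rw [← Finset.prod_subtype (Finset.univ.filter (fun p : Fin k × Fin k => p.1 < p.2))
      (by simp) f]
  rw [Finset.prod_filter, ← Finset.univ_product_univ, Finset.prod_product]
  exact Finset.prod_congr rfl fun i _ => (Finset.prod_filter _ _).symm

lemma offdiag_group {k : ℕ} (F : Fin k → Fin k → ℝ) (hF : ∀ i, F i i = 1) :
    ∏ i : Fin k, ∏ j : Fin k, F i j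
      = ∏ i : Fin k, ∏ j ∈ Finset.univ.filter (fun j => i < j), F i j * F j i := by
  have step : ∀ i : Fin k, ∏ j : Fin k, F i j
      = (∏ j ∈ Finset.univ.filter (fun j => i < j), F i j)
        * ∏ j ∈ Finset.univ.filter (fun j => j < i), F i j := by
    intro i
    rw [← Finset.prod_filter_mul_prod_filter_not Finset.univ (fun j => i < j) (F i)]
    congr 1
    have h2 : Finset.univ.filter (fun j => ¬ i < j)
        = insert i (Finset.univ.filter (fun j : Fin k => j < i)) := by
      ext j; simp [not_lt, le_iff_lt_or_eq, or_comm, eq_comm]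
    rw [h2, Finset.prod_insert (by simp), hF, one_mul]
  calc ∏ i : Fin k, ∏ j : Fin k, F i j
      = (∏ i : Fin k, ∏ j ∈ Finset.univ.filter (fun j => i < j), F i j)
        * ∏ i : Fin k, ∏ j ∈ Finset.univ.filter (fun j => j < i), F i j := by
        rw [← Finset.prod_mul_distrib]; exact Finset.prod_congr rfl fun i _ => step i
    _ = (∏ i : Fin k, ∏ j ∈ Finset.univ.filter (fun j => i < j), F i j)
        * ∏ i : Fin k, ∏ j ∈ Finset.univ.filter (fun j => i < j), F j i := by
        congr 1
        exact Finset.prod_comm' (by simp)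
    _ = _ := by rw [← Finset.prod_mul_distrib]
                exact Finset.prod_congr rfl fun i _ => (Finset.prod_mul_distrib).symm

lemma dot_pow {d : ℕ} (v w : Fin d → ℝ) (m : ℕ) :
    ∑ f : Fin m → Fin d, ∏ l : Fin m, (v (f l) * w (f l)) = dotR v w ^ m := by
  rw [← Fintype.piFinset_univ,
    ← Finset.prod_univ_sum (fun _ : Fin m => (Finset.univ : Finset (Fin d)))
      (fun _ a => v a * w a)]
  simp [dotR, Finset.prod_const, Finset.card_univ]

lemma lookup_prod {d k : ℕ} (α : Fin k → Fin k → ℕ) (hsym : ∀ i j, α i j = α j i)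
    (β : BetaType d k α) (v w : Fin d → ℝ) {i j : Fin k} (h : i < j) :
    (∏ l : Fin (offdiag α i j), v (lookup α hsym β i j l)) *
    (∏ l : Fin (offdiag α j i), w (lookup α hsym β j i l))
      = ∏ l : Fin (α i j), (v (β ⟨(i,j),h⟩ l) * w (β ⟨(i,j),h⟩ l)) := by
  have e1 : offdiag α i j = α i j := by simp [offdiag, h.ne]
  have e2 : offdiag α j i = α i j := by
    simp only [offdiag, if_neg h.ne']; exact hsym j i
  have h1 : (∏ l : Fin (offdiag α i j), v (lookup α hsym β i j l))
      = ∏ l : Fin (α i j), v (β ⟨(i,j),h⟩ l) := by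
    apply Fintype.prod_equiv (finCongr e1)
    intro l
    simp only [lookup, dif_pos h]
    rfl
  have h2 : (∏ l : Fin (offdiag α j i), w (lookup α hsym β j i l))
      = ∏ l : Fin (α i j), w (β ⟨(i,j),h⟩ l) := by
    apply Fintype.prod_equiv (finCongr e2)
    intro l
    simp only [lookup, dif_neg (lt_asymm h), dif_pos h]
    rfl
  rw [h1, h2, ← Finset.prod_mul_distrib]

lemma key {d n k : ℕ} (u : Fin n → Fin d → ℝ) (α : Fin k → Fin k → ℕ)
    (hsym : ∀ i j, α i j = α j i) (γ : Fin k → Fin n) :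
    ∑ β : BetaType d k α, ∏ i : Fin k,
      (normSqR (u (γ i)) ^ α i i * ∏ z : Fin (∑ j, offdiag α i j),
        u (γ i) (lookup α hsym β i (concatIdx α i z).1 (concatIdx α i z).2))
    = ∏ i : Fin k, ∏ j ∈ Finset.univ.filter (fun j : Fin k => i ≤ j),
        (dotR (u (γ i)) (u (γ j))) ^ (α i j) := by
  -- split off the constant normSq factors
  simp only [Finset.prod_mul_distrib]
  rw [← Finset.mul_sum]
  -- rewrite the β-sum
  have hsum : ∑ β : BetaType d k α, ∏ i : Fin k, ∏ z : Fin (∑ j, offdiag α i j),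
        u (γ i) (lookup α hsym β i (concatIdx α i z).1 (concatIdx α i z).2)
      = ∏ p : {p : Fin k × Fin k // p.1 < p.2},
          (dotR (u (γ p.val.1)) (u (γ p.val.2))) ^ (α p.val.1 p.val.2) := by
    have hB : ∀ β : BetaType d k α, ∏ i : Fin k, ∏ z : Fin (∑ j, offdiag α i j),
          u (γ i) (lookup α hsym β i (concatIdx α i z).1 (concatIdx α i z).2)
        = ∏ p : {p : Fin k × Fin k // p.1 < p.2},
            ∏ l : Fin (α p.val.1 p.val.2),
              (u (γ p.val.1) (β p l) * u (γ p.val.2) (β p l)) := by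
      intro β
      have hBi : ∀ i : Fin k, ∏ z : Fin (∑ j, offdiag α i j),
            u (γ i) (lookup α hsym β i (concatIdx α i z).1 (concatIdx α i z).2)
          = ∏ j : Fin k, ∏ l : Fin (offdiag α i j), u (γ i) (lookup α hsym β i j l) := by
        intro i
        rw [Equiv.prod_comp (concatIdx α i)
          (fun s : Σ j : Fin k, Fin (offdiag α i j) => u (γ i) (lookup α hsym β i s.1 s.2))]
        rw [← Finset.univ_sigma_univ, Finset.prod_sigma]
      simp only [hBi]
      rw [offdiag_group _ (fun i => by
        have : offdiag α i i = 0 := by simp [offdiag]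
        haveI : IsEmpty (Fin (offdiag α i i)) := by rw [this]; infer_instance
        exact Finset.prod_of_isEmpty _)]
      have hgb := pair_prod (fun q : Fin k × Fin k =>
        if h : q.1 < q.2 then
          ∏ l : Fin (α q.1 q.2), (u (γ q.1) (β ⟨q, h⟩ l) * u (γ q.2) (β ⟨q, h⟩ l))
        else 1)
      rw [show (∏ i : Fin k, ∏ j ∈ Finset.univ.filter (fun j => i < j),
          ((∏ l : Fin (offdiag α i j), u (γ i) (lookup α hsym β i j l)) *
           (∏ l : Fin (offdiag α j i), u (γ j) (lookup α hsym β j i l))))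
        = ∏ i : Fin k, ∏ j ∈ Finset.univ.filter (fun j => i < j),
            (fun q : Fin k × Fin k =>
              if h : q.1 < q.2 then
                ∏ l : Fin (α q.1 q.2), (u (γ q.1) (β ⟨q, h⟩ l) * u (γ q.2) (β ⟨q, h⟩ l))
              else 1) (i, j) from ?_, ← hgb]
      · apply Finset.prod_congr rfl
        intro p _
        simp only [dif_pos p.2]
      · apply Finset.prod_congr rfl; intro i _
        apply Finset.prod_congr rfl; intro j hj
        have hij : i < j := by simpa using hj
        simp only [dif_pos hij]
        exact lookup_prod α hsym β _ _ hij
    simp only [hB]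
    rw [← Fintype.piFinset_univ,
      ← Finset.prod_univ_sum
        (fun p : {p : Fin k × Fin k // p.1 < p.2} => (Finset.univ : Finset (Fin (α p.val.1 p.val.2) → Fin d)))
        (fun p g => ∏ l : Fin (α p.val.1 p.val.2), (u (γ p.val.1) (g l) * u (γ p.val.2) (g l)))]
    apply Finset.prod_congr rfl
    intro p _
    exact dot_pow _ _ _
  rw [hsum]
  -- assemble the RHS
  have hfil : ∀ i : Fin k, Finset.univ.filter (fun j : Fin k => i ≤ j)
      = insert i (Finset.univ.filter (fun j : Fin k => i < j)) := by
    intro i; ext j; simp [le_iff_lt_or_eq, or_comm, eq_comm]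
  have hrhs : ∏ i : Fin k, ∏ j ∈ Finset.univ.filter (fun j : Fin k => i ≤ j),
        (dotR (u (γ i)) (u (γ j))) ^ (α i j)
      = (∏ i : Fin k, (dotR (u (γ i)) (u (γ i))) ^ (α i i)) *
        ∏ i : Fin k, ∏ j ∈ Finset.univ.filter (fun j : Fin k => i < j),
          (dotR (u (γ i)) (u (γ j))) ^ (α i j) := by
    rw [← Finset.prod_mul_distrib]
    apply Finset.prod_congr rfl
    intro i _
    rw [hfil i, Finset.prod_insert (by simp)]
  rw [hrhs, pair_prod (fun q : Fin k × Fin k => (dotR (u (γ q.1)) (u (γ q.2))) ^ (α q.1 q.2))]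
  rfl

/-- For `1 ≤ k ≤ n` and symmetric `α ∈ ℕ^{k×k}`, the full contraction of the
moment tensors `M_{α_{ii}, α'_i}(u)` equals
`Σ_{γ ∈ {1,…,n}^k} Π_{1 ≤ i ≤ j ≤ k} (u_{γ_i} · u_{γ_j})^{α_{ij}}`
(the factor for `i = j` being `|u_{γ_i}|^{2 α_{ii}}`). -/
theorem stmt4 (d n : ℕ) (hd : 1 ≤ d) (hn : 1 ≤ n)
    (u : Fin n → Fin d → ℝ) (k : ℕ) (hk1 : 1 ≤ k) (hkn : k ≤ n)
    (α : Fin k → Fin k → ℕ) (hsym : ∀ i j, α i j = α j i) :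
    contraction u k α hsym
      = ∑ γ : Fin k → Fin n, ∏ i : Fin k,
          ∏ j ∈ Finset.univ.filter (fun j : Fin k => i ≤ j),
            (dotR (u (γ i)) (u (γ j))) ^ (α i j) := by
  simp only [contraction, Mten, Finset.prod_univ_sum, Fintype.piFinset_univ]
  rw [Finset.sum_comm]
  exact Finset.sum_congr rfl fun γ _ => key u α hsym γ
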